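/- Let G be a triangle-free simple graph of order n ≥ 3. Then λ₁(G) + λ₂(G) < √(n(n−2)) < n. -/

import Mathlib

open Matrix Finset

private lemma stmt11_trace_eq_sum_eig {n : ℕ} (A : Matrix (Fin n) (Fin n) ℝ)
    (hA : A.IsHermitian) : Matrix.trace A = ∑ i, hA.eigenvalues i := by
  conv_lhs => rw [hA.spectral_theorem, Unitary.conjStarAlgAut_apply]
  rw [Matrix.trace_mul_cycle, Unitary.coe_star_mul_self, one_mul, Matrix.trace_diagonal]
  simp

private lemma stmt11_trace_sq_eq_sum_eig_sq {n : ℕ} (A : Matrix (Fin n) (Fin n) ℝ)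
    (hA : A.IsHermitian) : Matrix.trace (A * A) = ∑ i, hA.eigenvalues i ^ 2 := by
  set U := (hA.eigenvectorUnitary : Matrix (Fin n) (Fin n) ℝ) with hUdef
  set D : Matrix (Fin n) (Fin n) ℝ := diagonal (RCLike.ofReal ∘ hA.eigenvalues) with hDdef
  have h1 : star U * U = 1 := Unitary.coe_star_mul_self hA.eigenvectorUnitary
  have h1' : ∀ B : Matrix (Fin n) (Fin n) ℝ, star U * (U * B) = B := fun B => by
    rw [← mul_assoc, h1, one_mul]
  have key : A * A = U * (D * (D * star U)) := by
    conv_lhs => rw [hA.spectral_theorem, Unitary.conjStarAlgAut_apply, ← hUdef, ← hDdef]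
    simp only [mul_assoc]
    rw [h1']
  rw [key, ← mul_assoc, ← mul_assoc, Matrix.trace_mul_cycle, h1', hDdef,
    diagonal_mul_diagonal, Matrix.trace_diagonal]
  simp [sq]

private lemma stmt11_triple {n : ℕ} (f : Fin n → ℝ) (g : Fin n → Fin n → ℝ) :
    ∑ i, ∑ j, ∑ k, f k * (g i k * g j k) = ∑ k, f k * (∑ i, g i k) ^ 2 := by
  have h1 : ∀ i : Fin n, ∑ j, ∑ k, f k * (g i k * g j k)
      = ∑ k, f k * (g i k * ∑ j, g j k) := by
    intro i
    rw [Finset.sum_comm]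
    exact Finset.sum_congr rfl fun k _ => by rw [Finset.mul_sum, Finset.mul_sum]
  simp_rw [h1]
  rw [Finset.sum_comm]
  refine Finset.sum_congr rfl fun k _ => ?_
  rw [sq, Finset.sum_mul, Finset.mul_sum]

private lemma stmt11_rayleigh {n : ℕ} (A : Matrix (Fin n) (Fin n) ℝ) (hA : A.IsHermitian) :
    ∑ i, ∑ j, A i j = ∑ k, hA.eigenvalues k *
      (∑ i, (hA.eigenvectorUnitary : Matrix (Fin n) (Fin n) ℝ) i k) ^ 2 := by
  set U := (hA.eigenvectorUnitary : Matrix (Fin n) (Fin n) ℝ) with hUdef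
  have hentry : ∀ i j, A i j = ∑ k, hA.eigenvalues k * (U i k * U j k) := by
    intro i j
    conv_lhs => rw [hA.spectral_theorem, Unitary.conjStarAlgAut_apply, ← hUdef]
    rw [Matrix.mul_apply]
    congr 1; ext l
    rw [Matrix.mul_diagonal, star_apply]
    simp [mul_comm, mul_assoc, mul_left_comm]
  calc ∑ i, ∑ j, A i j = ∑ i, ∑ j, ∑ k, hA.eigenvalues k * (U i k * U j k) := by
        simp only [hentry]
    _ = ∑ k, hA.eigenvalues k * (∑ i, U i k) ^ 2 := stmt11_triple _ _

private lemma stmt11_normone {n : ℕ} (A : Matrix (Fin n) (Fin n) ℝ) (hA : A.IsHermitian) :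
    ∑ k, (∑ i, (hA.eigenvectorUnitary : Matrix (Fin n) (Fin n) ℝ) i k) ^ 2 = n := by
  set U := (hA.eigenvectorUnitary : Matrix (Fin n) (Fin n) ℝ) with hUdef
  have h2 : U * star U = 1 := Unitary.coe_mul_star_self hA.eigenvectorUnitary
  have key : ∑ i, ∑ j, (U * star U) i j = ∑ i, ∑ j, (1 : Matrix (Fin n) (Fin n) ℝ) i j := by
    rw [h2]
  have lhs_eq : ∑ i, ∑ j, (U * star U) i j
      = ∑ k, (1 : ℝ) * (∑ i, U i k) ^ 2 := by
    rw [← stmt11_triple (fun _ => (1 : ℝ)) U]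
    refine Finset.sum_congr rfl fun i _ => Finset.sum_congr rfl fun j _ => ?_
    rw [Matrix.mul_apply]
    refine Finset.sum_congr rfl fun k _ => ?_
    rw [star_apply]
    simp [mul_comm]
  have rhs_eq : ∑ i, ∑ j, (1 : Matrix (Fin n) (Fin n) ℝ) i j = (n : ℝ) := by
    simp [Matrix.one_apply]
  rw [lhs_eq, rhs_eq] at key
  simpa using key

private lemma stmt11_degree_bound {n : ℕ} (hn : 3 ≤ n) (G : SimpleGraph (Fin n))
    [DecidableRel G.Adj] (htf : G.CliqueFree 3) :
    2 * (∑ v, (G.degree v : ℝ)) ≤ (n : ℝ) ^ 2 := by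
  classical
  set d : Fin n → ℝ := fun v => (G.degree v : ℝ) with hd
  have hdnn : ∀ v, 0 ≤ d v := fun v => Nat.cast_nonneg _
  have step1 : ∀ u v, G.Adj u v → d u + d v ≤ (n : ℝ) := by
    intro u v huv
    have hdisj : Disjoint (G.neighborFinset u) (G.neighborFinset v) := by
      rw [Finset.disjoint_left]
      intro w hwu hwv
      rw [SimpleGraph.mem_neighborFinset] at hwu hwv
      exact htf {u, v, w} (SimpleGraph.is3Clique_triple_iff.mpr ⟨huv, hwu, hwv⟩)
    have key : G.degree u + G.degree v ≤ n := by
      calc G.degree u + G.degree v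
          = ((G.neighborFinset u) ∪ (G.neighborFinset v)).card := by
            rw [Finset.card_union_of_disjoint hdisj]; rfl
        _ ≤ Fintype.card (Fin n) := Finset.card_le_univ _
        _ = n := by simp
    simp only [hd]
    exact_mod_cast key
  have step2a : ∀ u, ∑ _v ∈ G.neighborFinset u, d u = d u * d u := by
    intro u
    rw [Finset.sum_const, nsmul_eq_mul]; rfl
  have step2b : ∑ u, ∑ v ∈ G.neighborFinset u, d v = ∑ v, d v * d v := by
    have h : ∀ u, ∑ v ∈ G.neighborFinset u, d v = ∑ v, if G.Adj u v then d v else 0 := by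
      intro u
      rw [SimpleGraph.neighborFinset_eq_filter, Finset.sum_filter]
    simp_rw [h]
    rw [Finset.sum_comm]
    refine Finset.sum_congr rfl fun v _ => ?_
    rw [← Finset.sum_filter]
    have hfil : Finset.filter (fun u => G.Adj u v) Finset.univ = G.neighborFinset v := by
      ext u; simp [SimpleGraph.adj_comm]
    rw [hfil, Finset.sum_const, nsmul_eq_mul]; rfl
  have step3 : ∑ u, ∑ v ∈ G.neighborFinset u, (d u + d v) ≤ ∑ u, d u * n := by
    refine Finset.sum_le_sum fun u _ => ?_
    calc ∑ v ∈ G.neighborFinset u, (d u + d v)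
        ≤ ∑ _v ∈ G.neighborFinset u, (n : ℝ) :=
          Finset.sum_le_sum fun v hv => step1 u v ((SimpleGraph.mem_neighborFinset G u v).mp hv)
      _ = d u * n := by rw [Finset.sum_const, nsmul_eq_mul]; rfl
  have step4 : 2 * ∑ u, d u * d u ≤ (∑ u, d u) * n := by
    have lhs_eq : ∑ u, ∑ v ∈ G.neighborFinset u, (d u + d v) = 2 * ∑ u, d u * d u := by
      simp_rw [Finset.sum_add_distrib]
      rw [step2b]
      simp_rw [step2a]
      ring
    rw [← lhs_eq]
    calc ∑ u, ∑ v ∈ G.neighborFinset u, (d u + d v) ≤ ∑ u, d u * n := step3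
      _ = (∑ u, d u) * n := by rw [← Finset.sum_mul]
  have step5 : (∑ u, d u) ^ 2 ≤ (n : ℝ) * ∑ u, d u * d u := by
    have h := sq_sum_le_card_mul_sum_sq (s := (Finset.univ : Finset (Fin n))) (f := d)
    simpa [sq] using h
  have hM : 0 ≤ ∑ u, d u := Finset.sum_nonneg fun u _ => hdnn u
  have hN : (3 : ℝ) ≤ (n : ℝ) := by exact_mod_cast hn
  nlinarith [step4, step5, hM, hN, sq_nonneg (∑ u, d u)]


set_option maxHeartbeats 1000000 in
private lemma stmt11_arith (N T a b r : ℝ) (hN : 3 ≤ N)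
    (hedge : 2*T ≤ N^2) (hray : T ≤ a*N)
    (hCS : (a+b)^2 ≤ (N-2)*(T - a^2 - b^2))
    (hrnn : 0 ≤ r) (hr2 : r^2 = N*(N-2)) (hrlt : r < N - 1) (hrpos : 0 < r) :
    a + b < r := by
  obtain ⟨s, hs⟩ : ∃ s, s = a + b := ⟨a + b, rfl⟩
  rw [← hs]
  have hb' : b = s - a := by rw [hs]; ring
  have hCS0 : s^2 ≤ (N-2)*(T - a^2 - b^2) := by rw [hs]; exact hCS
  have hCS' : s^2 ≤ (N-2)*(T - a^2 - (s-a)^2) := by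
    rw [← hb']; exact hCS0
  have hs2 : s^2 * N ≤ 2*T*(N-2) := by
    nlinarith [hCS', mul_nonneg (by linarith : (0:ℝ) ≤ N-2) (sq_nonneg (2*a-s))]
  rcases le_or_gt s (N-2) with hc | hc
  · have hgt : N - 2 < r := by nlinarith [hr2, hrnn, hN]
    linarith
  · have hspos : 0 < s := by linarith
    have hsN : s * N < 2*T := by
      nlinarith [hs2, mul_pos hspos (sub_pos.mpr hc), hN]
    rcases le_or_gt T (s*N) with hc2 | hc2
    · have h1 : 0 ≤ a*N - T := by linarith
      have h2 : 0 ≤ a*N + T - s*N := by linarith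
      have hmono : 2*T^2 - 2*s*T*N ≤ 2*a^2*N^2 - 2*s*a*N^2 := by nlinarith [mul_nonneg h1 h2]
      have hCS2 := mul_le_mul_of_nonneg_right hCS' (sq_nonneg N)
      have hmono2 := mul_le_mul_of_nonneg_left hmono (by linarith : (0:ℝ) ≤ N-2)
      have hphi2 : 0 ≤ (N-2) * ((N^2/2 - T) * (s*N - T)) :=
        mul_nonneg (by linarith) (mul_nonneg (by linarith) (by linarith))
      have hfin : s*(N-1) ≤ N*(N-2) := by
        by_contra hcon
        push_neg at hcon
        have hsn2 : 0 < s * N^2 := mul_pos hspos (by nlinarith)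
        linarith only [hCS2, hmono2, hphi2, mul_pos hsn2 (by linarith : (0:ℝ) < s*(N-1) - N*(N-2))]
      nlinarith [hfin, hr2, mul_lt_mul_of_pos_left hrlt hrpos, hN]
    · have hslt : s < N/2 := by nlinarith [hc2, hedge, hN, hspos]
      have hrge : N/2 ≤ r := by
        by_contra hcon
        push_neg at hcon
        nlinarith [hr2, mul_self_lt_mul_self hrnn hcon, hN]
      linarith

/-- For a triangle-free simple graph of order `n ≥ 3`, the two
largest adjacency eigenvalues satisfy `λ₁ + λ₂ < √(n(n−2)) < n`. -/
theorem stmt11 {n : ℕ} (hn : 3 ≤ n) (G : SimpleGraph (Fin n)) [DecidableRel G.Adj]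
    (htf : G.CliqueFree 3)
    (hA : (G.adjMatrix ℝ).IsHermitian)
    (lam : Fin n → ℝ) (σ : Equiv.Perm (Fin n))
    (hlam : lam = hA.eigenvalues ∘ σ) (hdec : Antitone lam) :
    lam ⟨0, by omega⟩ + lam ⟨1, by omega⟩ <
        Real.sqrt ((n : ℝ) * ((n : ℝ) - 2)) ∧
      Real.sqrt ((n : ℝ) * ((n : ℝ) - 2)) < n := by
  have hN : (3 : ℝ) ≤ (n : ℝ) := by exact_mod_cast hn
  have hNN : 0 ≤ (n : ℝ) * ((n : ℝ) - 2) := by nlinarith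
  set r := Real.sqrt ((n : ℝ) * ((n : ℝ) - 2)) with hrdef
  have hrnn : 0 ≤ r := Real.sqrt_nonneg _
  have hr2 : r ^ 2 = (n : ℝ) * ((n : ℝ) - 2) := Real.sq_sqrt hNN
  have hrpos : 0 < r := by nlinarith [hr2, hrnn]
  have hrlt : r < (n : ℝ) - 1 := by nlinarith [sq_nonneg (r - ((n : ℝ) - 1))]
  refine ⟨?_, by linarith⟩
  -- the sum of degrees
  set T : ℝ := ∑ v, (G.degree v : ℝ) with hTdef
  have hTnn : 0 ≤ T := Finset.sum_nonneg fun v _ => Nat.cast_nonneg _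
  have hedge : 2 * T ≤ (n : ℝ) ^ 2 := stmt11_degree_bound hn G htf
  -- trace identities
  have htr1 : ∑ i, hA.eigenvalues i = 0 := by
    rw [← stmt11_trace_eq_sum_eig _ hA]
    simp
  have htr2 : ∑ i, (hA.eigenvalues i) ^ 2 = T := by
    rw [← stmt11_trace_sq_eq_sum_eig_sq _ hA, Matrix.trace, hTdef]
    refine Finset.sum_congr rfl fun i _ => ?_
    rw [Matrix.diag_apply, SimpleGraph.adjMatrix_mul_self_apply_self]
  have hl1 : ∑ i, lam i = 0 := by
    rw [hlam, ← htr1]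
    exact Equiv.sum_comp σ hA.eigenvalues
  have hl2 : ∑ i, (lam i) ^ 2 = T := by
    rw [hlam, ← htr2]
    exact Equiv.sum_comp σ (fun i => hA.eigenvalues i ^ 2)
  set i0 : Fin n := ⟨0, by omega⟩ with hi0
  set i1 : Fin n := ⟨1, by omega⟩ with hi1
  show lam i0 + lam i1 < r
  have hmax : ∀ k, hA.eigenvalues k ≤ lam i0 := by
    intro k
    have h1 : hA.eigenvalues k = lam (σ.symm k) := by rw [hlam]; simp
    rw [h1]
    exact hdec (by rw [Fin.le_def]; exact Nat.zero_le _)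
  -- Rayleigh bound : T ≤ lam i0 * n
  have hray : T ≤ lam i0 * n := by
    have hT2 : T = ∑ i, ∑ j, (G.adjMatrix ℝ) i j := by
      rw [hTdef]
      refine Finset.sum_congr rfl fun i _ => ?_
      simp only [SimpleGraph.adjMatrix_apply]
      rw [Finset.sum_boole]
      simp [SimpleGraph.neighborFinset_eq_filter, SimpleGraph.degree]
    have hUsum := stmt11_rayleigh _ hA
    have hnorm := stmt11_normone _ hA
    rw [hT2, hUsum]
    calc ∑ k, hA.eigenvalues k *
          (∑ i, (hA.eigenvectorUnitary : Matrix (Fin n) (Fin n) ℝ) i k) ^ 2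
        ≤ ∑ k, lam i0 * (∑ i, (hA.eigenvectorUnitary : Matrix (Fin n) (Fin n) ℝ) i k) ^ 2 :=
          Finset.sum_le_sum fun k _ => mul_le_mul_of_nonneg_right (hmax k) (sq_nonneg _)
      _ = lam i0 * ∑ k, (∑ i, (hA.eigenvectorUnitary : Matrix (Fin n) (Fin n) ℝ) i k) ^ 2 := by
          rw [Finset.mul_sum]
      _ = lam i0 * n := by rw [hnorm]
  -- Cauchy–Schwarz on the remaining eigenvalues
  have hi01 : i0 ≠ i1 := by
    simp only [hi0, hi1, ne_eq, Fin.mk.injEq]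
    omega
  set P : Finset (Fin n) := {i0, i1} with hP
  have hPsub : P ⊆ Finset.univ := Finset.subset_univ _
  have hPcard : P.card = 2 := by
    rw [hP, Finset.card_insert_of_notMem (by simp [hi01]), Finset.card_singleton]
  have hcard : (((Finset.univ : Finset (Fin n)) \ P).card : ℝ) = (n : ℝ) - 2 := by
    rw [Finset.card_sdiff_of_subset hPsub, hPcard, Finset.card_univ, Fintype.card_fin,
      Nat.cast_sub (by omega : 2 ≤ n)]
    norm_num
  have hset1 : ∑ i ∈ Finset.univ \ P, lam i = -(lam i0 + lam i1) := by
    rw [Finset.sum_sdiff_eq_sub hPsub, hl1, hP, Finset.sum_pair hi01]; ring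
  have hset2 : ∑ i ∈ Finset.univ \ P, (lam i) ^ 2 = T - (lam i0) ^ 2 - (lam i1) ^ 2 := by
    rw [Finset.sum_sdiff_eq_sub hPsub, hl2, hP, Finset.sum_pair hi01]; ring
  have hCS : (lam i0 + lam i1) ^ 2 ≤ ((n : ℝ) - 2) * (T - (lam i0) ^ 2 - (lam i1) ^ 2) := by
    have h := sq_sum_le_card_mul_sum_sq (s := Finset.univ \ P) (f := lam)
    rw [hset1, hset2, hcard, neg_sq] at h
    exact h
  exact stmt11_arith (n : ℝ) T (lam i0) (lam i1) r hN hedge hray hCS hrnn hr2 hrlt hrpos
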